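/- Let 0 < α < 1, let t_0 = 0 < t_1 < … < t_N be the graded mesh t_k = T(k/N)^r with r ≥ 1, let φ_0,…,φ_N be the fitted basis functions, and let u^0,…,u^N be arbitrary real numbers. Then for every n with 1 ≤ n ≤ N, (1/Γ(1−α)) { (u^n − u^0)/t_n^α + α ∫₀^{t_n} (t_n − s)^{−α−1} Σ_{k=0}^{n−1} φ_k(s) (u^n − u^k) ds } = (α/Γ(1−α)) Σ_{k=0}^{n−1} [ (u^{k+1} − u^k)/(t_{k+1}^α − t_k^α) ] ∫_{t_k}^{t_{k+1}} s^{α−1} (t_n − s)^{−α} ds. -/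

import Mathlib

open MeasureTheory

/-- The graded temporal mesh `t_n = T (n/N)^r`. -/
noncomputable def mesh (r T : ℝ) (N : ℕ) (k : ℕ) : ℝ :=
  T * ((k : ℝ) / (N : ℝ)) ^ r

/-- The fitted basis functions `φ_k` on the mesh `t`, exact for `1` and `s^α`. -/
noncomputable def fittedBasis (α : ℝ) (t : ℕ → ℝ) (N : ℕ) (k : ℕ) (s : ℝ) : ℝ :=
  if k = 0 then
    if 0 ≤ s ∧ s ≤ t 1 then (t 1 ^ α - s ^ α) / t 1 ^ α else 0
  else if k = N then
    if t (N - 1) ≤ s ∧ s ≤ t N then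
      (s ^ α - t (N - 1) ^ α) / (t N ^ α - t (N - 1) ^ α)
    else 0
  else
    if t (k - 1) ≤ s ∧ s ≤ t k then
      (s ^ α - t (k - 1) ^ α) / (t k ^ α - t (k - 1) ^ α)
    else if t k ≤ s ∧ s ≤ t (k + 1) then
      (t (k + 1) ^ α - s ^ α) / (t (k + 1) ^ α - t k ^ α)
    else 0

/-- The discrete fitted Caputo operator `D_N^α` acting on grid values `u`. -/
noncomputable def discreteCaputo (α : ℝ) (t : ℕ → ℝ) (u : ℕ → ℝ) (n : ℕ) : ℝ :=
  (α / Real.Gamma (1 - α)) * ∑ k ∈ Finset.range n,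
    (u (k + 1) - u k) / (t (k + 1) ^ α - t k ^ α) *
      ∫ s in Set.Ioo (t k) (t (k + 1)), s ^ (α - 1) * (t n - s) ^ (-α)

namespace DCRep

lemma ioo_integral_eq {f : ℝ → ℝ} {a b : ℝ} (h : a ≤ b) :
    ∫ s in Set.Ioo a b, f s = ∫ s in a..b, f s := by
  rw [intervalIntegral.integral_of_le h, MeasureTheory.integral_Ioc_eq_integral_Ioo]

lemma rpow_sub_le {α : ℝ} (hα0 : 0 < α) (hα1 : α < 1) {x y : ℝ} (hx : 0 < x) (hxy : x ≤ y) :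
    y ^ α - x ^ α ≤ α * x ^ (α - 1) * (y - x) := by
  rcases eq_or_lt_of_le hxy with rfl | hlt
  · simp
  obtain ⟨ξ, hξ, hslope⟩ := exists_hasDerivAt_eq_slope (fun s : ℝ => s ^ α)
      (fun s : ℝ => α * s ^ (α - 1)) hlt
      (fun z _ => (Real.continuousAt_rpow_const z α (Or.inr hα0.le)).continuousWithinAt)
      (fun z hz => Real.hasDerivAt_rpow_const (Or.inl (lt_trans hx hz.1).ne'))
  have hyx : 0 < y - x := by linarith
  have h1 := (eq_div_iff hyx.ne').1 hslope
  have hξx : ξ ^ (α - 1) ≤ x ^ (α - 1) :=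
    Real.rpow_le_rpow_of_nonpos hx hξ.1.le (by linarith)
  nlinarith [mul_le_mul_of_nonneg_right (mul_le_mul_of_nonneg_left hξx hα0.le) hyx.le]

lemma integrable2 {α : ℝ} (hα0 : 0 < α) (hα1 : α < 1) {tn : ℝ} (htn : 0 < tn) :
    IntegrableOn (fun s : ℝ => s ^ (α - 1) * (tn - s) ^ (-α)) (Set.Ioo 0 tn) := by
  have hm0 : 0 < tn / 2 := by linarith
  have hmeas : Measurable (fun s : ℝ => s ^ (α - 1) * (tn - s) ^ (-α)) := by fun_prop
  have hsplit : Set.Ioo (0:ℝ) tn = Set.Ioo 0 (tn/2) ∪ Set.Ico (tn/2) tn :=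
    (Set.Ioo_union_Ico_eq_Ioo hm0 (by linarith)).symm
  rw [hsplit]
  refine MeasureTheory.IntegrableOn.union ?_ ?_
  · have hg : IntegrableOn (fun s : ℝ => (tn/2) ^ (-α) * s ^ (α - 1)) (Set.Ioo 0 (tn/2)) := by
      have h := (intervalIntegral.intervalIntegrable_rpow'
          (show (-1:ℝ) < α - 1 by linarith) (a := 0) (b := tn/2)).1
      exact (h.mono_set Set.Ioo_subset_Ioc_self).const_mul _
    refine Integrable.mono hg (hmeas.aestronglyMeasurable.restrict) ?_
    refine (ae_restrict_iff' measurableSet_Ioo).2 (Filter.Eventually.of_forall fun s hs => ?_)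
    obtain ⟨hs0, hstn⟩ := hs
    have h1 : (0:ℝ) ≤ s ^ (α - 1) := Real.rpow_nonneg hs0.le _
    have h2 : (tn - s) ^ (-α) ≤ (tn/2) ^ (-α) :=
      Real.rpow_le_rpow_of_nonpos hm0 (by linarith) (by linarith)
    rw [Real.norm_eq_abs, Real.norm_eq_abs,
      abs_of_nonneg (mul_nonneg h1 (Real.rpow_nonneg (by linarith) _)),
      abs_of_nonneg (mul_nonneg (Real.rpow_nonneg hm0.le _) h1)]
    calc s ^ (α - 1) * (tn - s) ^ (-α) ≤ s ^ (α - 1) * (tn/2) ^ (-α) :=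
          mul_le_mul_of_nonneg_left h2 h1
      _ = (tn/2) ^ (-α) * s ^ (α - 1) := mul_comm _ _
  · have hg : IntegrableOn (fun s : ℝ => (tn/2) ^ (α - 1) * (tn - s) ^ (-α))
        (Set.Ico (tn/2) tn) := by
      have h := (intervalIntegral.intervalIntegrable_rpow'
          (show (-1:ℝ) < -α by linarith) (a := 0) (b := tn/2)).comp_sub_left tn
      rw [show tn - (0:ℝ) = tn by ring, show tn - tn/2 = tn/2 by ring] at h
      have h2 := h.2
      have h' : IntegrableOn (fun x : ℝ => (tn - x) ^ (-α)) (Set.Ico (tn/2) tn) :=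
        (integrableOn_Ico_iff_integrableOn_Ioo).2
          ((integrableOn_Ioc_iff_integrableOn_Ioo).1 h2)
      exact h'.const_mul _
    refine Integrable.mono hg (hmeas.aestronglyMeasurable.restrict) ?_
    refine (ae_restrict_iff' measurableSet_Ico).2 (Filter.Eventually.of_forall fun s hs => ?_)
    obtain ⟨hs0, hstn⟩ := hs
    have hs0' : 0 < s := lt_of_lt_of_le hm0 hs0
    have h1 : (0:ℝ) ≤ (tn - s) ^ (-α) := Real.rpow_nonneg (by linarith) _
    have h2 : s ^ (α - 1) ≤ (tn/2) ^ (α - 1) :=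
      Real.rpow_le_rpow_of_nonpos hm0 hs0 (by linarith)
    rw [Real.norm_eq_abs, Real.norm_eq_abs,
      abs_of_nonneg (mul_nonneg (Real.rpow_nonneg hs0'.le _) h1),
      abs_of_nonneg (mul_nonneg (Real.rpow_nonneg hm0.le _) h1)]
    exact mul_le_mul_of_nonneg_right h2 h1

lemma interval2 {α : ℝ} (hα0 : 0 < α) (hα1 : α < 1) {tn a b : ℝ} (ha : 0 ≤ a) (hab : a ≤ b)
    (hb : b ≤ tn) (htn : 0 < tn) :
    IntervalIntegrable (fun s : ℝ => s ^ (α - 1) * (tn - s) ^ (-α)) volume a b := by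
  rw [intervalIntegrable_iff_integrableOn_Ioo_of_le hab]
  exact (integrable2 hα0 hα1 htn).mono_set (Set.Ioo_subset_Ioo ha hb)

lemma interval1 {α : ℝ} (hα0 : 0 < α) (hα1 : α < 1) {tn a b c d : ℝ} (ha : 0 ≤ a) (hab : a < b)
    (hb : b ≤ tn) (hbd : b = tn → d = c * tn ^ α) :
    IntervalIntegrable (fun s : ℝ => (tn - s) ^ (-α - 1) * (d - c * s ^ α)) volume a b := by
  have htn : 0 < tn := lt_of_lt_of_le (lt_of_le_of_lt ha hab) hb
  rcases lt_or_eq_of_le hb with hblt | hbe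
  · apply ContinuousOn.intervalIntegrable
    apply ContinuousOn.mul
    · apply ContinuousOn.rpow_const (continuousOn_const.sub continuousOn_id)
      intro z hz
      rw [Set.uIcc_of_le hab.le] at hz
      exact Or.inl (sub_pos.2 (lt_of_le_of_lt hz.2 hblt)).ne'
    · exact continuousOn_const.sub (continuousOn_const.mul
        (continuousOn_id.rpow_const fun z _ => Or.inr hα0.le))
  · subst hbe
    have hd : d = c * b ^ α := hbd rfl
    rw [intervalIntegrable_iff_integrableOn_Ioo_of_le hab.le]
    have hg : IntegrableOn (fun s : ℝ => |c| * α * (s ^ (α - 1) * (b - s) ^ (-α)))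
        (Set.Ioo a b) :=
      (((integrable2 hα0 hα1 htn).mono_set (Set.Ioo_subset_Ioo ha le_rfl)).const_mul _)
    refine Integrable.mono hg ?_ ?_
    · exact ((show Measurable fun s : ℝ => (b - s) ^ (-α - 1) * (d - c * s ^ α) by
        fun_prop)).aestronglyMeasurable.restrict
    refine (ae_restrict_iff' measurableSet_Ioo).2 (Filter.Eventually.of_forall fun s hs => ?_)
    obtain ⟨hsa, hstn⟩ := hs
    have hs0 : 0 < s := lt_of_le_of_lt ha hsa
    have hne : b - s ≠ 0 := (sub_pos.2 hstn).ne'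
    have hsub := rpow_sub_le hα0 hα1 hs0 hstn.le
    have hnn : (0:ℝ) ≤ b ^ α - s ^ α :=
      sub_nonneg.2 (Real.rpow_le_rpow hs0.le hstn.le hα0.le)
    have hpow := Real.rpow_add_one hne (-α - 1)
    rw [show -α - 1 + 1 = -α by ring] at hpow
    have h1 : ‖(b - s) ^ (-α - 1) * (d - c * s ^ α)‖
        = (b - s) ^ (-α - 1) * (|c| * (b ^ α - s ^ α)) := by
      rw [hd, show c * b ^ α - c * s ^ α = c * (b ^ α - s ^ α) by ring,
        Real.norm_eq_abs, abs_mul, abs_of_nonneg (Real.rpow_nonneg (by linarith) _), abs_mul,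
        abs_of_nonneg hnn]
    rw [h1]
    have hA : (0:ℝ) ≤ (b - s) ^ (-α - 1) := Real.rpow_nonneg (by linarith) _
    have hb2 : (b - s) ^ (-α - 1) * (|c| * (b ^ α - s ^ α))
        ≤ |c| * α * (s ^ (α - 1) * (b - s) ^ (-α)) := by
      calc (b - s) ^ (-α - 1) * (|c| * (b ^ α - s ^ α))
          ≤ (b - s) ^ (-α - 1) * (|c| * (α * s ^ (α - 1) * (b - s))) :=
            mul_le_mul_of_nonneg_left (mul_le_mul_of_nonneg_left hsub (abs_nonneg c)) hA
        _ = |c| * α * (s ^ (α - 1) * (b - s) ^ (-α)) := by rw [hpow]; ring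
    exact hb2.trans (le_abs_self _)

lemma core {α : ℝ} (hα0 : 0 < α) (hα1 : α < 1) {tn a b c d : ℝ} (ha : 0 ≤ a) (hab : a < b)
    (hb : b ≤ tn) (hbd : b = tn → d = c * tn ^ α) :
    α * ∫ s in a..b, (tn - s) ^ (-α - 1) * (d - c * s ^ α)
      = ((tn - b) ^ (-α) * (d - c * b ^ α) - (tn - a) ^ (-α) * (d - c * a ^ α))
        + c * α * ∫ s in a..b, s ^ (α - 1) * (tn - s) ^ (-α) := by
  have htn : 0 < tn := lt_of_lt_of_le (lt_of_le_of_lt ha hab) hb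
  have hi1 := interval1 hα0 hα1 ha hab hb hbd
  have hi2 := interval2 hα0 hα1 ha hab.le hb htn
  have hderiv : ∀ x ∈ Set.Ioo a b,
      HasDerivAt (fun s : ℝ => (tn - s) ^ (-α) * (d - c * s ^ α))
        (α * ((tn - x) ^ (-α - 1) * (d - c * x ^ α))
          - c * α * (x ^ (α - 1) * (tn - x) ^ (-α))) x := by
    intro x hx
    have hx0 : 0 < x := lt_of_le_of_lt ha hx.1
    have hxtn : x < tn := lt_of_lt_of_le hx.2 hb
    have h1 : HasDerivAt (fun s : ℝ => (tn - s) ^ (-α)) (-1 * -α * (tn - x) ^ (-α - 1)) x :=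
      ((hasDerivAt_id x).const_sub tn).rpow_const (Or.inl (sub_pos.2 hxtn).ne')
    have h2 : HasDerivAt (fun s : ℝ => d - c * s ^ α) (-(c * (α * x ^ (α - 1)))) x :=
      ((Real.hasDerivAt_rpow_const (Or.inl hx0.ne')).const_mul c).const_sub d
    have h3 := h1.fun_mul h2
    refine h3.congr_deriv ?_
    ring
  have htends_a : Filter.Tendsto (fun s : ℝ => (tn - s) ^ (-α) * (d - c * s ^ α))
      (nhdsWithin a (Set.Ioi a)) (nhds ((tn - a) ^ (-α) * (d - c * a ^ α))) := by
    have c1 : ContinuousAt (fun s : ℝ => (tn - s) ^ (-α)) a :=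
      (continuousAt_const.sub continuousAt_id).rpow_const
        (Or.inl (sub_pos.2 (lt_of_lt_of_le hab hb)).ne')
    have c2 : ContinuousAt (fun s : ℝ => d - c * s ^ α) a :=
      continuousAt_const.sub (continuousAt_const.mul
        (continuousAt_id.rpow_const (Or.inr hα0.le)))
    exact (c1.mul c2).tendsto.mono_left nhdsWithin_le_nhds
  have htends_b : Filter.Tendsto (fun s : ℝ => (tn - s) ^ (-α) * (d - c * s ^ α))
      (nhdsWithin b (Set.Iio b)) (nhds ((tn - b) ^ (-α) * (d - c * b ^ α))) := by
    rcases lt_or_eq_of_le hb with hblt | hbe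
    · have c1 : ContinuousAt (fun s : ℝ => (tn - s) ^ (-α)) b :=
        (continuousAt_const.sub continuousAt_id).rpow_const (Or.inl (sub_pos.2 hblt).ne')
      have c2 : ContinuousAt (fun s : ℝ => d - c * s ^ α) b :=
        continuousAt_const.sub (continuousAt_const.mul
          (continuousAt_id.rpow_const (Or.inr hα0.le)))
      exact (c1.mul c2).tendsto.mono_left nhdsWithin_le_nhds
    · subst hbe
      have hd : d = c * b ^ α := hbd rfl
      have hval : (b - b) ^ (-α) * (d - c * b ^ α) = 0 := by rw [hd]; ring
      rw [hval]
      refine squeeze_zero_norm'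
        (a := fun s : ℝ => |c| * α * (b/2) ^ (α - 1) * (b - s) ^ (1 - α)) ?_ ?_
      · filter_upwards [Ioo_mem_nhdsLT_of_mem
          (Set.right_mem_Ioc.2 (by linarith : b/2 < b))] with s hs
        obtain ⟨hs1, hs2⟩ := hs
        have hs0 : 0 < s := by linarith
        have hne : b - s ≠ 0 := (sub_pos.2 hs2).ne'
        have hsub := rpow_sub_le hα0 hα1 hs0 hs2.le
        have hnn : (0:ℝ) ≤ b ^ α - s ^ α :=
          sub_nonneg.2 (Real.rpow_le_rpow hs0.le hs2.le hα0.le)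
        have hs' : s ^ (α - 1) ≤ (b/2) ^ (α - 1) :=
          Real.rpow_le_rpow_of_nonpos (by linarith) hs1.le (by linarith)
        have hpow := Real.rpow_add_one hne (-α)
        rw [show -α + 1 = 1 - α by ring] at hpow
        rw [hd, show c * b ^ α - c * s ^ α = c * (b ^ α - s ^ α) by ring,
          Real.norm_eq_abs, abs_mul, abs_of_nonneg (Real.rpow_nonneg (by linarith) _), abs_mul,
          abs_of_nonneg hnn]
        calc (b - s) ^ (-α) * (|c| * (b ^ α - s ^ α))
            ≤ (b - s) ^ (-α) * (|c| * (α * (b/2) ^ (α - 1) * (b - s))) := by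
              refine mul_le_mul_of_nonneg_left
                (mul_le_mul_of_nonneg_left ?_ (abs_nonneg c))
                (Real.rpow_nonneg (by linarith) _)
              calc b ^ α - s ^ α ≤ α * s ^ (α - 1) * (b - s) := hsub
                _ ≤ α * (b/2) ^ (α - 1) * (b - s) :=
                    mul_le_mul_of_nonneg_right
                      (mul_le_mul_of_nonneg_left hs' hα0.le) (by linarith)
          _ = |c| * α * (b/2) ^ (α - 1) * (b - s) ^ (1 - α) := by rw [hpow]; ring
      · have h0 : Filter.Tendsto (fun s : ℝ => b - s) (nhdsWithin b (Set.Iio b)) (nhds 0) := by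
          have h0' : Filter.Tendsto (fun s : ℝ => b - s) (nhds b) (nhds (b - b)) :=
            (continuous_const.sub continuous_id).tendsto b
          rw [sub_self] at h0'
          exact h0'.mono_left nhdsWithin_le_nhds
        have h1 : Filter.Tendsto (fun s : ℝ => (b - s) ^ (1 - α))
            (nhdsWithin b (Set.Iio b)) (nhds 0) := by
          have hc : ContinuousAt (fun x : ℝ => x ^ (1 - α)) 0 :=
            Real.continuousAt_rpow_const 0 (1 - α) (Or.inr (by linarith))
          have h2 := hc.tendsto.comp h0
          rwa [Real.zero_rpow (by linarith : 1 - α ≠ 0)] at h2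
        have h3 := h1.const_mul (|c| * α * (b/2) ^ (α - 1))
        rwa [mul_zero] at h3
  have hFTC := intervalIntegral.integral_eq_sub_of_hasDerivAt_of_tendsto
      (f := fun s : ℝ => (tn - s) ^ (-α) * (d - c * s ^ α))
      (f' := fun x : ℝ => α * ((tn - x) ^ (-α - 1) * (d - c * x ^ α))
          - c * α * (x ^ (α - 1) * (tn - x) ^ (-α)))
      hab hderiv ((hi1.const_mul α).sub (hi2.const_mul (c * α))) htends_a htends_b
  rw [intervalIntegral.integral_sub (hi1.const_mul α) (hi2.const_mul (c * α)),
    intervalIntegral.integral_const_mul, intervalIntegral.integral_const_mul] at hFTC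
  linarith [hFTC]

lemma sum_basis {α : ℝ} (hα0 : 0 < α) {t : ℕ → ℝ} (ht0 : t 0 = 0) (htm : StrictMono t)
    {N n k : ℕ} (hk : k < n) (hnN : n ≤ N) (u : ℕ → ℝ) {s : ℝ}
    (hs : s ∈ Set.Ioo (t k) (t (k + 1))) :
    ∑ j ∈ Finset.range n, fittedBasis α t N j s * (u n - u j)
      = (u n - u k + (u (k + 1) - u k) / (t (k + 1) ^ α - t k ^ α) * t k ^ α)
        - (u (k + 1) - u k) / (t (k + 1) ^ α - t k ^ α) * s ^ α := by
  obtain ⟨hs1, hs2⟩ := hs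
  have htnn : ∀ j, 0 ≤ t j := fun j => ht0 ▸ htm.monotone (Nat.zero_le j)
  have hAmono : ∀ i j : ℕ, i < j → t i ^ α < t j ^ α := fun i j h =>
    Real.rpow_lt_rpow (htnn i) (htm h) hα0
  have hΔ : t (k + 1) ^ α - t k ^ α ≠ 0 :=
    sub_ne_zero.2 (hAmono k (k + 1) (Nat.lt_succ_self k)).ne'
  have hzero : ∀ j, 0 < j → j ≠ N → j ≠ k → j ≠ k + 1 → j ≤ k + 1 + (N - k) →
      fittedBasis α t N j s = 0 := by
    intro j hj1 hjN hjk hjk1 _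
    have hA : ¬(t (j - 1) ≤ s ∧ s ≤ t j) := by
      rcases lt_or_gt_of_ne hjk with hlt | hgt
      · exact fun h => absurd h.2 (not_le.2 (lt_of_le_of_lt (htm.monotone hlt.le) hs1))
      · exact fun h => absurd h.1
          (not_le.2 (lt_of_lt_of_le hs2 (htm.monotone (by omega : k + 1 ≤ j - 1))))
    have hB : ¬(t j ≤ s ∧ s ≤ t (j + 1)) := by
      rcases lt_or_gt_of_ne hjk with hlt | hgt
      · exact fun h => absurd h.2
          (not_le.2 (lt_of_le_of_lt (htm.monotone (by omega : j + 1 ≤ k)) hs1))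
      · exact fun h => absurd h.1 (not_le.2 (lt_of_lt_of_le hs2 (htm.monotone (by omega))))
    simp only [fittedBasis, if_neg hj1.ne', if_neg hjN, if_neg hA, if_neg hB]
  have hzero0 : 0 < k → fittedBasis α t N 0 s = 0 := by
    intro hk0
    have hcond : ¬(0 ≤ s ∧ s ≤ t 1) := by
      rintro ⟨-, hsle⟩
      exact absurd hsle (not_le.2 (lt_of_le_of_lt (htm.monotone hk0) hs1))
    simp only [fittedBasis, if_pos rfl, if_neg hcond, if_true]
  have hφk : fittedBasis α t N k s = (t (k + 1) ^ α - s ^ α) / (t (k + 1) ^ α - t k ^ α) := by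
    rcases Nat.eq_zero_or_pos k with rfl | hk1
    · have h0s : (0:ℝ) ≤ s := le_of_lt (ht0 ▸ hs1)
      have hcond : 0 ≤ s ∧ s ≤ t 1 := ⟨h0s, by simpa using hs2.le⟩
      simp only [fittedBasis, if_pos rfl, if_pos hcond, if_true, zero_add, ht0,
        Real.zero_rpow hα0.ne', sub_zero]
    · have hkN : k ≠ N := (lt_of_lt_of_le hk hnN).ne
      have hA : ¬(t (k - 1) ≤ s ∧ s ≤ t k) := fun h => absurd h.2 (not_le.2 hs1)
      simp only [fittedBasis, if_neg hk1.ne', if_neg hkN, if_neg hA,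
        if_pos (⟨hs1.le, hs2.le⟩ : t k ≤ s ∧ s ≤ t (k + 1))]
  have hjzero : ∀ j, j < n → j ≠ k → j ≠ k + 1 → fittedBasis α t N j s = 0 := by
    intro j hjn hjk hjk1
    rcases Nat.eq_zero_or_pos j with rfl | hj1
    · exact hzero0 (by omega)
    · exact hzero j hj1 (by omega) hjk hjk1 (by omega)
  rcases eq_or_lt_of_le (Nat.succ_le_of_lt hk) with hkn | hkn
  · subst hkn
    have hz : ∀ j ∈ Finset.range (k + 1), j ≠ k →
        fittedBasis α t N j s * (u (k + 1) - u j) = 0 := by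
      intro j hj hjk
      rw [hjzero j (Finset.mem_range.1 hj) hjk (by have := Finset.mem_range.1 hj; omega),
        zero_mul]
    rw [Finset.sum_eq_single_of_mem k (Finset.mem_range.2 (Nat.lt_succ_self k)) hz, hφk]
    field_simp
    ring
  · have hφk1 : fittedBasis α t N (k + 1) s
        = (s ^ α - t k ^ α) / (t (k + 1) ^ α - t k ^ α) := by
      have h1 : (k : ℕ) + 1 ≠ 0 := Nat.succ_ne_zero k
      have h2 : k + 1 ≠ N := by omega
      simp only [fittedBasis, if_neg h1, if_neg h2, Nat.add_sub_cancel,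
        if_pos (⟨hs1.le, hs2.le⟩ : t k ≤ s ∧ s ≤ t (k + 1))]
    have hsubset : ({k, k + 1} : Finset ℕ) ⊆ Finset.range n := by
      intro j hj
      simp only [Finset.mem_insert, Finset.mem_singleton] at hj
      rcases hj with rfl | rfl
      · exact Finset.mem_range.2 hk
      · exact Finset.mem_range.2 hkn
    have hz : ∀ j ∈ Finset.range n, j ∉ ({k, k + 1} : Finset ℕ) →
        fittedBasis α t N j s * (u n - u j) = 0 := by
      intro j hj hjmem
      simp only [Finset.mem_insert, Finset.mem_singleton] at hjmem
      push_neg at hjmem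
      rw [hjzero j (Finset.mem_range.1 hj) hjmem.1 hjmem.2, zero_mul]
    rw [← Finset.sum_subset hsubset hz, Finset.sum_insert (by simp), Finset.sum_singleton,
      hφk, hφk1]
    field_simp
    ring

theorem repr_general (α : ℝ) (hα0 : 0 < α) (hα1 : α < 1) (t : ℕ → ℝ) (ht0 : t 0 = 0)
    (htlt : ∀ k, t k < t (k + 1)) (N : ℕ) (u : ℕ → ℝ) (n : ℕ) (hn : 1 ≤ n) (hnN : n ≤ N) :
    (1 / Real.Gamma (1 - α)) *
        ((u n - u 0) / t n ^ α +
          α * ∫ s in Set.Ioo (0 : ℝ) (t n),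
            (t n - s) ^ (-α - 1) *
              ∑ k ∈ Finset.range n, fittedBasis α t N k s * (u n - u k))
      = discreteCaputo α t u n := by
  have htm : StrictMono t := strictMono_nat_of_lt_succ htlt
  have htnn : ∀ j, 0 ≤ t j := fun j => ht0 ▸ htm.monotone (Nat.zero_le j)
  have htn0 : 0 < t n := ht0 ▸ htm (show 0 < n from hn)
  have hAmono : ∀ i j : ℕ, i < j → t i ^ α < t j ^ α := fun i j h =>
    Real.rpow_lt_rpow (htnn i) (htm h) hα0
  have main : ∀ k, k < n →
      (IntervalIntegrable (fun s : ℝ => (t n - s) ^ (-α - 1) *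
          ∑ j ∈ Finset.range n, fittedBasis α t N j s * (u n - u j)) volume (t k) (t (k + 1)))
      ∧ (α * ∫ s in Set.Ioo (t k) (t (k + 1)), (t n - s) ^ (-α - 1) *
            ∑ j ∈ Finset.range n, fittedBasis α t N j s * (u n - u j)
          = ((t n - t (k + 1)) ^ (-α) * (u n - u (k + 1))
              - (t n - t k) ^ (-α) * (u n - u k))
            + (u (k + 1) - u k) / (t (k + 1) ^ α - t k ^ α) * α *
              ∫ s in Set.Ioo (t k) (t (k + 1)), s ^ (α - 1) * (t n - s) ^ (-α)) := by
    intro k hk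
    have hΔ : t (k + 1) ^ α - t k ^ α ≠ 0 :=
      sub_ne_zero.2 (hAmono k (k + 1) (Nat.lt_succ_self k)).ne'
    set c : ℝ := (u (k + 1) - u k) / (t (k + 1) ^ α - t k ^ α) with hc
    set d : ℝ := u n - u k + c * t k ^ α with hd
    have hcΔ : c * (t (k + 1) ^ α - t k ^ α) = u (k + 1) - u k := by
      rw [hc]; field_simp
    have hbd : t (k + 1) = t n → d = c * t n ^ α := by
      intro h
      have hkn : k + 1 = n := htm.injective h
      rw [hd, ← h, ← hkn]
      linarith [hcΔ]
    have hble : t (k + 1) ≤ t n := htm.monotone (Nat.succ_le_of_lt hk)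
    have hi1 := interval1 hα0 hα1 (htnn k) (htlt k) hble hbd
    have heq : Set.EqOn (fun s : ℝ => (t n - s) ^ (-α - 1) * (d - c * s ^ α))
        (fun s : ℝ => (t n - s) ^ (-α - 1) *
          ∑ j ∈ Finset.range n, fittedBasis α t N j s * (u n - u j))
        (Set.Ioo (t k) (t (k + 1))) := by
      intro s hs
      simp only
      rw [sum_basis hα0 ht0 htm hk hnN u hs, hd, hc]
    constructor
    · rw [intervalIntegrable_iff_integrableOn_Ioo_of_le (htlt k).le]
      rw [intervalIntegrable_iff_integrableOn_Ioo_of_le (htlt k).le] at hi1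
      exact hi1.congr_fun heq measurableSet_Ioo
    · have hIoo1 : ∫ s in Set.Ioo (t k) (t (k + 1)), (t n - s) ^ (-α - 1) *
            ∑ j ∈ Finset.range n, fittedBasis α t N j s * (u n - u j)
          = ∫ s in (t k)..(t (k + 1)), (t n - s) ^ (-α - 1) * (d - c * s ^ α) := by
        rw [← ioo_integral_eq (htlt k).le]
        exact (MeasureTheory.setIntegral_congr_fun measurableSet_Ioo heq).symm
      have hcoreq := core hα0 hα1 (htnn k) (htlt k) hble hbd
      have h1 : d - c * t (k + 1) ^ α = u n - u (k + 1) := by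
        rw [hd]; linarith [hcΔ]
      have h2 : d - c * t k ^ α = u n - u k := by rw [hd]; ring
      rw [hIoo1, hcoreq, h1, h2, ioo_integral_eq (htlt k).le]
  have hsplit : ∫ s in Set.Ioo (0:ℝ) (t n), (t n - s) ^ (-α - 1) *
        ∑ j ∈ Finset.range n, fittedBasis α t N j s * (u n - u j)
      = ∑ k ∈ Finset.range n, ∫ s in Set.Ioo (t k) (t (k + 1)), (t n - s) ^ (-α - 1) *
          ∑ j ∈ Finset.range n, fittedBasis α t N j s * (u n - u j) := by
    rw [show (0:ℝ) = t 0 from ht0.symm, ioo_integral_eq (htm.monotone (Nat.zero_le n)),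
      ← intervalIntegral.sum_integral_adjacent_intervals (fun k hk => (main k hk).1)]
    exact Finset.sum_congr rfl fun k _ => (ioo_integral_eq (htlt k).le).symm
  have hsum2 : α * ∑ k ∈ Finset.range n, (∫ s in Set.Ioo (t k) (t (k + 1)),
        (t n - s) ^ (-α - 1) * ∑ j ∈ Finset.range n, fittedBasis α t N j s * (u n - u j))
      = ∑ k ∈ Finset.range n,
          (((t n - t (k + 1)) ^ (-α) * (u n - u (k + 1)) - (t n - t k) ^ (-α) * (u n - u k))
            + (u (k + 1) - u k) / (t (k + 1) ^ α - t k ^ α) * α *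
              ∫ s in Set.Ioo (t k) (t (k + 1)), s ^ (α - 1) * (t n - s) ^ (-α)) := by
    rw [Finset.mul_sum]
    exact Finset.sum_congr rfl fun k hk => (main k (Finset.mem_range.1 hk)).2
  have htel : ∑ k ∈ Finset.range n,
      ((t n - t (k + 1)) ^ (-α) * (u n - u (k + 1)) - (t n - t k) ^ (-α) * (u n - u k))
      = -((t n - t 0) ^ (-α) * (u n - u 0)) := by
    rw [Finset.sum_range_sub (fun k => (t n - t k) ^ (-α) * (u n - u k))]
    simp
  have hSS : ∑ k ∈ Finset.range n,
      (((t n - t (k + 1)) ^ (-α) * (u n - u (k + 1)) - (t n - t k) ^ (-α) * (u n - u k))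
        + (u (k + 1) - u k) / (t (k + 1) ^ α - t k ^ α) * α *
          ∫ s in Set.Ioo (t k) (t (k + 1)), s ^ (α - 1) * (t n - s) ^ (-α))
      = -((t n - t 0) ^ (-α) * (u n - u 0))
        + α * ∑ k ∈ Finset.range n,
            (u (k + 1) - u k) / (t (k + 1) ^ α - t k ^ α) *
              ∫ s in Set.Ioo (t k) (t (k + 1)), s ^ (α - 1) * (t n - s) ^ (-α) := by
    rw [Finset.sum_add_distrib, htel, Finset.mul_sum]
    congr 1
    exact Finset.sum_congr rfl fun k _ => by ring
  rw [hsplit, hsum2, hSS, ht0, sub_zero, Real.rpow_neg (htnn n)]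
  simp only [discreteCaputo]
  rw [div_eq_mul_inv (u n - u 0)]
  ring

end DCRep

/-- Equivalence of the two representations of the discrete fitted Caputo operator:
the Vainikko-type form (obtained from the fitted interpolation of `ω(t)−ω(s)`)
equals the computational form `D_N^α` (obtained by integration by parts on each
subinterval). -/
theorem discreteCaputo_representation (α r T : ℝ) (hα0 : 0 < α) (hα1 : α < 1)
    (hr : 1 ≤ r) (hT : 0 < T) (N : ℕ) (hN : 1 ≤ N) (u : ℕ → ℝ) :
    ∀ n : ℕ, 1 ≤ n → n ≤ N →
      (1 / Real.Gamma (1 - α)) *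
          ((u n - u 0) / mesh r T N n ^ α +
            α * ∫ s in Set.Ioo (0 : ℝ) (mesh r T N n),
              (mesh r T N n - s) ^ (-α - 1) *
                ∑ k ∈ Finset.range n, fittedBasis α (mesh r T N) N k s * (u n - u k))
        = discreteCaputo α (mesh r T N) u n := by
  intro n hn hnN
  have hN0 : (0:ℝ) < (N:ℝ) := by exact_mod_cast hN
  have hr0 : (0:ℝ) < r := lt_of_lt_of_le zero_lt_one hr
  have ht0 : mesh r T N 0 = 0 := by
    simp [mesh, Real.zero_rpow hr0.ne']
  have htlt : ∀ k, mesh r T N k < mesh r T N (k + 1) := by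
    intro k
    have hdiv : ((k:ℝ)) / (N:ℝ) < (((k:ℕ) + 1 : ℕ) : ℝ) / (N:ℝ) := by
      push_cast
      gcongr
      linarith
    exact mul_lt_mul_of_pos_left
      (Real.rpow_lt_rpow (by positivity) hdiv hr0) hT
  exact DCRep.repr_general α hα0 hα1 (mesh r T N) ht0 htlt N u n hn hnN
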